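/- Let λ, σ, M > 0, let N ≥ 1 be an integer, and let φ_0, φ_1, …, φ_N : [0,∞) → [0,∞) be continuous functions such that φ_j(t) ≤ (4/σ²) ∫₀^t e^{−2λ(t−s)} φ_{j−1}(s) ds for all t ≥ 0 and 1 ≤ j ≤ N, and φ_0(s) ≤ M for all s ≥ 0. Then for all t ≥ 0, φ_N(t) ≤ M (2/(σ²λ))^N (1 − e^{−2λt} ∑_{j=0}^{N−1} (2λt)^j / j!). -/

import Mathlib

open MeasureTheory

private noncomputable def Egr (lam : ℝ) (j : ℕ) (t : ℝ) : ℝ :=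
  Real.exp (2 * lam * t) - ∑ i ∈ Finset.range j, (2 * lam * t) ^ i / (Nat.factorial i : ℝ)

private lemma Egr_cont (lam : ℝ) (j : ℕ) : Continuous (Egr lam j) := by
  unfold Egr
  continuity

private lemma Egr_hasDerivAt (lam : ℝ) (j : ℕ) (t : ℝ) :
    HasDerivAt (Egr lam (j + 1)) (2 * lam * Egr lam j t) t := by
  have hlin : HasDerivAt (fun t : ℝ => 2 * lam * t) (2 * lam) t := by
    simpa using (hasDerivAt_id t).const_mul (2 * lam)
  have hexp : HasDerivAt (fun t : ℝ => Real.exp (2 * lam * t))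
      (Real.exp (2 * lam * t) * (2 * lam)) t := (Real.hasDerivAt_exp _).comp t hlin
  have hsum : HasDerivAt (fun t : ℝ => ∑ i ∈ Finset.range (j + 1),
      (2 * lam * t) ^ i / (Nat.factorial i : ℝ))
      (∑ i ∈ Finset.range (j + 1),
        ((i : ℝ) * (2 * lam * t) ^ (i - 1) * (2 * lam)) / (Nat.factorial i : ℝ)) t := by
    apply HasDerivAt.fun_sum
    intro i _
    exact (hlin.pow i).div_const _
  have h := hexp.fun_sub hsum
  have hEgr : Egr lam (j + 1) = fun t => Real.exp (2 * lam * t) -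
      ∑ i ∈ Finset.range (j + 1), (2 * lam * t) ^ i / (Nat.factorial i : ℝ) := rfl
  rw [hEgr]
  refine h.congr_deriv ?_
  symm
  rw [Finset.sum_range_succ']
  unfold Egr
  rw [mul_sub, Finset.mul_sum]
  have hterm : ∀ i ∈ Finset.range j, 2 * lam * ((2 * lam * t) ^ i / (Nat.factorial i : ℝ)) =
      ((i + 1 : ℕ) : ℝ) * (2 * lam * t) ^ ((i + 1) - 1) * (2 * lam) / (Nat.factorial (i + 1) : ℝ) := by
    intro i _
    rw [Nat.add_sub_cancel, Nat.factorial_succ]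
    have h1 : (Nat.factorial i : ℝ) ≠ 0 := Nat.cast_ne_zero.mpr (Nat.factorial_ne_zero i)
    push_cast
    field_simp
  rw [Finset.sum_congr rfl hterm]
  simp
  ring

private lemma Egr_zero (lam : ℝ) (j : ℕ) : Egr lam (j + 1) 0 = 0 := by
  unfold Egr
  rw [Finset.sum_range_succ']
  simp

private lemma Egr_integral (lam : ℝ) (hlam : 0 < lam) (j : ℕ) (t : ℝ) :
    ∫ s in (0:ℝ)..t, Egr lam j s = Egr lam (j + 1) t / (2 * lam) := by
  have h : ∫ s in (0:ℝ)..t, 2 * lam * Egr lam j s = Egr lam (j + 1) t - Egr lam (j + 1) 0 :=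
    intervalIntegral.integral_eq_sub_of_hasDerivAt (fun s _ => Egr_hasDerivAt lam j s)
      ((continuous_const.mul (Egr_cont lam j)).intervalIntegrable _ _)
  rw [intervalIntegral.integral_const_mul, Egr_zero, sub_zero] at h
  have h2 : (2 * lam) ≠ 0 := by positivity
  field_simp
  linarith [h]

/-- **Iterated Gronwall recursion.**
Let `λ, σ, M > 0`, `N ≥ 1`, and let `φ_0, …, φ_N : [0,∞) → [0,∞)` be continuous with
`φ_j(t) ≤ (4/σ²) ∫₀^t e^{−2λ(t−s)} φ_{j−1}(s) ds` for `1 ≤ j ≤ N` and `φ_0 ≤ M`.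
Then `φ_N(t) ≤ M (2/(σ²λ))^N (1 − e^{−2λt} ∑_{j=0}^{N−1} (2λt)^j/j!)` for all `t ≥ 0`. -/
theorem iterated_gronwall (lam σ M : ℝ) (hlam : 0 < lam) (hσ : 0 < σ) (hM : 0 < M)
    (N : ℕ) (hN : 1 ≤ N) (φ : ℕ → ℝ → ℝ)
    (hcont : ∀ j ≤ N, ContinuousOn (φ j) (Set.Ici 0))
    (hnonneg : ∀ j ≤ N, ∀ t : ℝ, 0 ≤ t → 0 ≤ φ j t)
    (hrec : ∀ j : ℕ, 1 ≤ j → j ≤ N → ∀ t : ℝ, 0 ≤ t →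
      φ j t ≤ 4 / σ ^ 2 * ∫ s in (0:ℝ)..t, Real.exp (-(2 * lam) * (t - s)) * φ (j - 1) s)
    (h0 : ∀ s : ℝ, 0 ≤ s → φ 0 s ≤ M) :
    ∀ t : ℝ, 0 ≤ t →
      φ N t ≤ M * (2 / (σ ^ 2 * lam)) ^ N *
        (1 - Real.exp (-(2 * lam * t)) *
          ∑ j ∈ Finset.range N, (2 * lam * t) ^ j / (Nat.factorial j : ℝ)) := by
  set K := 2 / (σ ^ 2 * lam) with hK
  have hσ2 : (σ : ℝ) ^ 2 ≠ 0 := by positivity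
  have hlam' : (2 * lam : ℝ) ≠ 0 := by positivity
  have key : ∀ j, j ≤ N → ∀ t : ℝ, 0 ≤ t →
      φ j t ≤ M * K ^ j * (Real.exp (-(2 * lam * t)) * Egr lam j t) := by
    intro j
    induction j with
    | zero =>
      intro _ t ht
      have he : Real.exp (-(2 * lam * t)) * Egr lam 0 t = 1 := by
        unfold Egr
        simp [← Real.exp_add]
      rw [he]
      simpa using h0 t ht
    | succ j ih =>
      intro hjN t ht
      have hjN' : j ≤ N := Nat.le_of_succ_le hjN
      have hb := ih hjN'
      have h1 := hrec (j + 1) (Nat.succ_le_succ (Nat.zero_le j)) hjN t ht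
      simp only [Nat.add_sub_cancel] at h1
      have hcontφ : ContinuousOn (fun s => Real.exp (-(2 * lam) * (t - s)) * φ j s)
          (Set.uIcc (0:ℝ) t) := by
        rw [Set.uIcc_of_le ht]
        have c1 : Continuous fun s : ℝ => Real.exp (-(2 * lam) * (t - s)) :=
          Real.continuous_exp.comp (continuous_const.mul (continuous_const.sub continuous_id))
        exact c1.continuousOn.mul ((hcont j hjN').mono (fun x hx => hx.1))
      have hint1 : IntervalIntegrable (fun s => Real.exp (-(2 * lam) * (t - s)) * φ j s)
          volume 0 t := hcontφ.intervalIntegrable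
      have c1 : Continuous fun s : ℝ => Real.exp (-(2 * lam) * (t - s)) :=
        Real.continuous_exp.comp (continuous_const.mul (continuous_const.sub continuous_id))
      have c2 : Continuous fun s : ℝ => Real.exp (-(2 * lam * s)) :=
        Real.continuous_exp.comp (continuous_const.mul continuous_id).neg
      have hcontg : Continuous (fun s => Real.exp (-(2 * lam) * (t - s)) *
          (M * K ^ j * (Real.exp (-(2 * lam * s)) * Egr lam j s))) :=
        c1.mul (continuous_const.mul (c2.mul (Egr_cont lam j)))
      have hint2 : IntervalIntegrable (fun s => Real.exp (-(2 * lam) * (t - s)) *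
          (M * K ^ j * (Real.exp (-(2 * lam * s)) * Egr lam j s))) volume 0 t :=
        hcontg.intervalIntegrable _ _
      have hmono : (∫ s in (0:ℝ)..t, Real.exp (-(2 * lam) * (t - s)) * φ j s) ≤
          ∫ s in (0:ℝ)..t, Real.exp (-(2 * lam) * (t - s)) *
            (M * K ^ j * (Real.exp (-(2 * lam * s)) * Egr lam j s)) := by
        apply intervalIntegral.integral_mono_on ht hint1 hint2
        intro s hs
        exact mul_le_mul_of_nonneg_left (hb s hs.1) (Real.exp_pos _).le
      have hfun : (fun s : ℝ => Real.exp (-(2 * lam) * (t - s)) *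
          (M * K ^ j * (Real.exp (-(2 * lam * s)) * Egr lam j s))) =
          fun s : ℝ => M * K ^ j * Real.exp (-(2 * lam * t)) * Egr lam j s := by
        funext s
        rw [show Real.exp (-(2 * lam) * (t - s)) * (M * K ^ j * (Real.exp (-(2 * lam * s)) * Egr lam j s))
            = M * K ^ j * (Real.exp (-(2 * lam) * (t - s)) * Real.exp (-(2 * lam * s))) * Egr lam j s by ring,
          ← Real.exp_add]
        ring_nf
      have hcalc : (∫ s in (0:ℝ)..t, Real.exp (-(2 * lam) * (t - s)) *
            (M * K ^ j * (Real.exp (-(2 * lam * s)) * Egr lam j s))) =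
          M * K ^ j * Real.exp (-(2 * lam * t)) * (Egr lam (j + 1) t / (2 * lam)) := by
        rw [hfun, intervalIntegral.integral_const_mul, Egr_integral lam hlam]
      have hfinal : 4 / σ ^ 2 * (M * K ^ j * Real.exp (-(2 * lam * t)) *
            (Egr lam (j + 1) t / (2 * lam))) =
          M * K ^ (j + 1) * (Real.exp (-(2 * lam * t)) * Egr lam (j + 1) t) := by
        have hKval : (4:ℝ) / σ ^ 2 * (1 / (2 * lam)) = K := by
          rw [hK]; field_simp; ring
        calc 4 / σ ^ 2 * (M * K ^ j * Real.exp (-(2 * lam * t)) * (Egr lam (j + 1) t / (2 * lam)))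
            = (4 / σ ^ 2 * (1 / (2 * lam))) *
              (M * K ^ j * (Real.exp (-(2 * lam * t)) * Egr lam (j + 1) t)) := by ring
          _ = M * K ^ (j + 1) * (Real.exp (-(2 * lam * t)) * Egr lam (j + 1) t) := by
              rw [hKval, pow_succ]; ring
      calc φ (j + 1) t ≤ 4 / σ ^ 2 * ∫ s in (0:ℝ)..t,
              Real.exp (-(2 * lam) * (t - s)) * φ j s := h1
        _ ≤ 4 / σ ^ 2 * (M * K ^ j * Real.exp (-(2 * lam * t)) *
              (Egr lam (j + 1) t / (2 * lam))) := by
            rw [← hcalc]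
            exact mul_le_mul_of_nonneg_left hmono (by positivity)
        _ = M * K ^ (j + 1) * (Real.exp (-(2 * lam * t)) * Egr lam (j + 1) t) := hfinal
  intro t ht
  have h := key N le_rfl t ht
  have heq : Real.exp (-(2 * lam * t)) * Egr lam N t =
      1 - Real.exp (-(2 * lam * t)) *
        ∑ j ∈ Finset.range N, (2 * lam * t) ^ j / (Nat.factorial j : ℝ) := by
    unfold Egr
    rw [mul_sub, ← Real.exp_add]
    simp
  rw [heq] at h
  exact h
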